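/- Let G be a graph on n vertices with minimum degree δ(G) and let R be obtained from an application of the degree form of the regularity lemma with parameters ε, d (giving reduced partition V₀, V₁, …, V_k with |V₀| ≤ εn, |V₁| = ⋯ = |V_k| = m, and pure graph G′ with d_{G′}(v) ≥ d_G(v) − (d+ε)n), where R is the multigraph on {V₁,…,V_k} with ⌊d_{G′}(Vᵢ,Vⱼ)/β⌋ parallel edges between Vᵢ and Vⱼ. If ε, β ≪ d, then R has minimum degree at least (δ(G)/n − 2d)·k/β. -/

import Mathlib

/-- Degree bound for the reduced multigraph of the regularity lemma: with clusters
`P 0, …, P (k-1)` of size `m`, exceptional set of size at most `εn`, pure graph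
`G' ≤ G` with `d_{G'}(v) ≥ d_G(v) − (d+ε)n`, no `G'`-edges inside clusters, and
where the reduced multigraph `R` has `⌊density(Vᵢ,Vⱼ)/β⌋` parallel edges between
clusters `Vᵢ` and `Vⱼ`, the minimum degree of `R` is at least
`(δ(G)/n − 2d)·k/β` (provided `ε, β ≤ d/8` and `(1−ε)n ≤ mk ≤ n`). -/
theorem stmt_16 (n k m : ℕ) (ε β d : ℝ)
    (hn : 0 < n) (hk : 0 < k) (hm : 0 < m)
    (hε : 0 < ε) (hεd : ε ≤ d / 8) (hβ : 0 < β) (hβd : β ≤ d / 8) (hd : 0 < d)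
    (hmk₁ : (1 - ε) * n ≤ (m : ℝ) * k) (hmk₂ : m * k ≤ n)
    (G G' : SimpleGraph (Fin n)) [DecidableRel G.Adj] [DecidableRel G'.Adj]
    (P : Fin k → Finset (Fin n))
    (hPcard : ∀ i, (P i).card = m)
    (hPdisj : ∀ i j, i ≠ j → Disjoint (P i) (P j))
    (hV0 : ((Finset.univ \ Finset.univ.biUnion P).card : ℝ) ≤ ε * n)
    (hsub : G' ≤ G)
    (hdeg : ∀ v, (G.degree v : ℝ) - (d + ε) * n ≤ (G'.degree v : ℝ))
    (hempty : ∀ i, ∀ u ∈ P i, ∀ w ∈ P i, ¬ G'.Adj u w) :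
    ∀ i, ((G.minDegree : ℝ) / n - 2 * d) * ((k : ℝ) / β) ≤
      ((∑ j ∈ Finset.univ.erase i,
        ⌊(((G'.interedges (P i) (P j)).card : ℝ) / (m : ℝ)^2) / β⌋ : ℤ) : ℝ) := by
  intro i
  have hNpos : (0:ℝ) < n := by exact_mod_cast hn
  have hMpos : (0:ℝ) < m := by exact_mod_cast hm
  have hKpos : (0:ℝ) < k := by exact_mod_cast hk
  have hmk₂' : (m : ℝ) * k ≤ n := by exact_mod_cast hmk₂
  set δ : ℝ := (G.minDegree : ℝ) with hδdef
  set F : Fin k → ℤ := fun j =>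
    ⌊(((G'.interedges (P i) (P j)).card : ℝ) / (m : ℝ)^2) / β⌋ with hFdef
  set S : ℝ := ((∑ j ∈ Finset.univ.erase i, F j : ℤ) : ℝ) with hSdef
  have hFnn : ∀ j, (0:ℤ) ≤ F j := by
    intro j
    apply Int.floor_nonneg.2
    positivity
  have hS0 : (0:ℝ) ≤ S := by
    rw [hSdef]
    exact_mod_cast Finset.sum_nonneg fun j _ => hFnn j
  -- per-vertex degree upper bound
  have hdeg_split : ∀ x ∈ P i, (G'.degree x : ℝ)
      ≤ ε * n + ∑ j ∈ Finset.univ.erase i, (((P j).filter (G'.Adj x)).card : ℝ) := by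
    intro x hx
    set B := Finset.univ.biUnion P with hB
    set N := G'.neighborFinset x with hN
    have h1 : (N \ B).card + (N ∩ B).card = N.card := Finset.card_sdiff_add_card_inter N B
    have h2 : (N \ B).card ≤ (Finset.univ \ B).card :=
      Finset.card_le_card (Finset.sdiff_subset_sdiff (Finset.subset_univ _) le_rfl)
    have h3 : N ∩ B = Finset.univ.biUnion fun j => N ∩ P j := by
      rw [hB, Finset.inter_biUnion]
    have h4 : (N ∩ B).card ≤ ∑ j, (N ∩ P j).card := by
      rw [h3]; exact Finset.card_biUnion_le
    have h5 : N ∩ P i = ∅ := by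
      ext w
      simp only [Finset.mem_inter, SimpleGraph.mem_neighborFinset, Finset.notMem_empty,
        iff_false, not_and, hN]
      intro hw hw2
      exact hempty i x hx w hw2 hw
    have h6 : ∑ j, (N ∩ P j).card = ∑ j ∈ Finset.univ.erase i, (N ∩ P j).card := by
      rw [← Finset.add_sum_erase _ _ (Finset.mem_univ i), h5]
      simp
    have h7 : ∀ j, N ∩ P j = (P j).filter (G'.Adj x) := by
      intro j
      ext w
      simp [hN, SimpleGraph.mem_neighborFinset, and_comm]
    have h8 : (G'.degree x : ℕ) ≤ (Finset.univ \ B).card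
        + ∑ j ∈ Finset.univ.erase i, ((P j).filter (G'.Adj x)).card := by
      have : G'.degree x = N.card := rfl
      rw [this, ← h1]
      gcongr
      calc (N ∩ B).card ≤ ∑ j, (N ∩ P j).card := h4
        _ = ∑ j ∈ Finset.univ.erase i, (N ∩ P j).card := h6
        _ = ∑ j ∈ Finset.univ.erase i, ((P j).filter (G'.Adj x)).card := by
            simp_rw [h7]
    have h8' : (G'.degree x : ℝ) ≤ ((Finset.univ \ B).card : ℝ)
        + ∑ j ∈ Finset.univ.erase i, (((P j).filter (G'.Adj x)).card : ℝ) := by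
      exact_mod_cast h8
    exact h8'.trans (by gcongr)
  -- interedges count as sum over vertices of P i
  have hinter : ∀ j, ((G'.interedges (P i) (P j)).card : ℕ)
      = ∑ x ∈ P i, ((P j).filter (G'.Adj x)).card := by
    intro j
    have : G'.interedges (P i) (P j) = (P i ×ˢ P j).filter fun e => G'.Adj e.1 e.2 := rfl
    rw [this, Finset.card_filter, Finset.sum_product]
    exact Finset.sum_congr rfl fun x _ => (Finset.card_filter _ _).symm
  -- lower bound on the degree sum
  have hlow : (m:ℝ) * (δ - (d+ε)*n) ≤ ∑ x ∈ P i, (G'.degree x : ℝ) := by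
    have h1 : ∀ x ∈ P i, δ - (d+ε)*n ≤ (G'.degree x : ℝ) := by
      intro x _
      have h2 : δ ≤ (G.degree x : ℝ) := by
        rw [hδdef]; exact_mod_cast G.minDegree_le_degree x
      linarith [hdeg x]
    calc (m:ℝ) * (δ - (d+ε)*n) = ∑ _x ∈ P i, (δ - (d+ε)*n) := by
          rw [Finset.sum_const, hPcard i, nsmul_eq_mul]
      _ ≤ ∑ x ∈ P i, (G'.degree x : ℝ) := Finset.sum_le_sum h1
  -- upper bound on the degree sum
  have hup : ∑ x ∈ P i, (G'.degree x : ℝ)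
      ≤ (m:ℝ) * (ε*n) + ∑ j ∈ Finset.univ.erase i, ((G'.interedges (P i) (P j)).card : ℝ) := by
    calc ∑ x ∈ P i, (G'.degree x : ℝ)
        ≤ ∑ x ∈ P i, (ε * n + ∑ j ∈ Finset.univ.erase i,
            (((P j).filter (G'.Adj x)).card : ℝ)) := Finset.sum_le_sum hdeg_split
      _ = (m:ℝ) * (ε*n) + ∑ x ∈ P i, ∑ j ∈ Finset.univ.erase i,
            (((P j).filter (G'.Adj x)).card : ℝ) := by
          rw [Finset.sum_add_distrib, Finset.sum_const, hPcard i, nsmul_eq_mul]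
      _ = (m:ℝ) * (ε*n) + ∑ j ∈ Finset.univ.erase i,
            ((G'.interedges (P i) (P j)).card : ℝ) := by
          rw [Finset.sum_comm]
          congr 1
          refine Finset.sum_congr rfl fun j _ => ?_
          rw [hinter j]
          push_cast
          rfl
  -- each interedge count bounded via the floor
  have hfl : ∀ j ∈ Finset.univ.erase i,
      ((G'.interedges (P i) (P j)).card : ℝ) ≤ β * (m:ℝ)^2 * ((F j : ℝ) + 1) := by
    intro j _
    have h1 : (((G'.interedges (P i) (P j)).card : ℝ) / (m:ℝ)^2) / β < (F j : ℝ) + 1 :=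
      Int.lt_floor_add_one _
    have hm2 : (0:ℝ) < (m:ℝ)^2 := by positivity
    have h2 : ((G'.interedges (P i) (P j)).card : ℝ) / (m:ℝ)^2 < β * ((F j : ℝ) + 1) := by
      rw [div_lt_iff₀ hβ] at h1
      linarith
    rw [div_lt_iff₀ hm2] at h2
    nlinarith
  have hsumfl : ∑ j ∈ Finset.univ.erase i, ((G'.interedges (P i) (P j)).card : ℝ)
      ≤ β * (m:ℝ)^2 * (S + k) := by
    calc ∑ j ∈ Finset.univ.erase i, ((G'.interedges (P i) (P j)).card : ℝ)
        ≤ ∑ j ∈ Finset.univ.erase i, β * (m:ℝ)^2 * ((F j : ℝ) + 1) :=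
          Finset.sum_le_sum hfl
      _ = β * (m:ℝ)^2 * (S + (Finset.univ.erase i).card) := by
          rw [← Finset.mul_sum, Finset.sum_add_distrib, Finset.sum_const, nsmul_eq_mul,
            mul_one, hSdef]
          push_cast
          ring
      _ ≤ β * (m:ℝ)^2 * (S + k) := by
          have hcard : ((Finset.univ.erase i).card : ℝ) ≤ k := by
            have := Finset.card_erase_le (s := (Finset.univ : Finset (Fin k))) (a := i)
            have h2 : (Finset.univ.erase i).card ≤ k := by simpa using this
            exact_mod_cast h2
          have : (0:ℝ) ≤ β * (m:ℝ)^2 := by positivity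
          nlinarith
  -- the main inequality
  have H : (m:ℝ) * (δ - (d+ε)*n) ≤ (m:ℝ) * (ε*n) + β * (m:ℝ)^2 * (S + k) :=
    hlow.trans (hup.trans (by linarith))
  have H' : δ - (d+ε)*n ≤ ε*n + β*(m:ℝ)*(S + k) := by
    have heq : (m:ℝ) * (ε*n + β*(m:ℝ)*(S+k)) = (m:ℝ)*(ε*n) + β*(m:ℝ)^2*(S+k) := by ring
    have := H.trans_eq heq.symm
    exact le_of_mul_le_mul_left this hMpos
  have key : (δ - 2*d*(n:ℝ)) * k ≤ S * ((n:ℝ) * β) := by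
    have hKH : (δ - (d+ε)*n) * k ≤ (ε*n + β*(m:ℝ)*(S+k)) * k :=
      mul_le_mul_of_nonneg_right H' hKpos.le
    have hSMK : β * (S * ((m:ℝ)*k)) ≤ β * (S * n) := by
      apply mul_le_mul_of_nonneg_left _ hβ.le
      exact mul_le_mul_of_nonneg_left hmk₂' hS0
    have he2 : ε * (n:ℝ) * k ≤ d/8 * n * k := by
      have : ε * (n:ℝ) ≤ d/8 * n := mul_le_mul_of_nonneg_right hεd hNpos.le
      exact mul_le_mul_of_nonneg_right this hKpos.le
    have hb1 : β * ((m:ℝ)*k) * k ≤ β * n * k := by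
      have : β * ((m:ℝ)*k) ≤ β * n := mul_le_mul_of_nonneg_left hmk₂' hβ.le
      exact mul_le_mul_of_nonneg_right this hKpos.le
    have hb2 : β * (n:ℝ) * k ≤ d/8 * n * k :=
      mul_le_mul_of_nonneg_right (mul_le_mul_of_nonneg_right hβd hNpos.le) hKpos.le
    have hdnk : (0:ℝ) ≤ d * n * k := by positivity
    ring_nf at hKH hSMK he2 hb1 hb2 hdnk ⊢
    linarith [hKH, hSMK, he2, hb1, hb2, hdnk]
  have heq2 : (δ / n - 2*d) * ((k:ℝ)/β) = ((δ - 2*d*n) * k) / ((n:ℝ)*β) := by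
    field_simp
  rw [heq2, div_le_iff₀ (by positivity)]
  exact key
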